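/- Let db be a database instance and q = ∃u(q(u)) a self-join-free Boolean conjunctive query with an acyclic attack graph. For every repair r of db there exists a superfrugal repair r* of db such that, for every sequence c of constants of length |u|, if r* ⊨ q(c) then r ⊨ q(c). -/

import Mathlib

open scoped Classical

/-! ## Variables, constants, relation names -/

abbrev Var : Type := ℕ
abbrev RelName : Type := ℕ

/-- A term: a variable or a constant (a non-negative rational). -/
inductive Trm : Type where
  | var : Var → Trm
  | const : ℚ≥0 → Trm
deriving DecidableEq

/-- An atom `R(x̲, y)`: relation name, primary-key arguments, remaining arguments. -/
structure DBAtom : Type where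
  rel : RelName
  keyArgs : List Trm
  nonkeyArgs : List Trm
deriving DecidableEq, Inhabited

/-- A fact: an atom without variables. -/
structure DBFact : Type where
  rel : RelName
  keyArgs : List ℚ≥0
  nonkeyArgs : List ℚ≥0
deriving DecidableEq

def Trm.var? : Trm → Option Var
  | .var v => some v
  | .const _ => none

def Trm.const? : Trm → Option ℚ≥0
  | .var _ => none
  | .const c => some c

def DBAtom.keyVars (F : DBAtom) : Finset Var := (F.keyArgs.filterMap Trm.var?).toFinset

def DBAtom.allVars (F : DBAtom) : Finset Var :=
  ((F.keyArgs ++ F.nonkeyArgs).filterMap Trm.var?).toFinset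

def DBAtom.notkeyVars (F : DBAtom) : Finset Var := F.allVars \ F.keyVars

def qVars (q : List DBAtom) : Finset Var := q.foldr (fun F s => F.allVars ∪ s) ∅

/-- Self-join-free: pairwise distinct relation names. -/
def SelfJoinFree (q : List DBAtom) : Prop := (q.map DBAtom.rel).Nodup

def KeyEqual (f g : DBFact) : Prop := f.rel = g.rel ∧ f.keyArgs = g.keyArgs

def DBConsistent (s : Finset DBFact) : Prop :=
  ∀ f ∈ s, ∀ g ∈ s, KeyEqual f g → f = g

/-- A repair: an inclusion-maximal consistent subset. -/
def IsRepair (db r : Finset DBFact) : Prop :=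
  r ⊆ db ∧ DBConsistent r ∧
    ∀ s : Finset DBFact, r ⊆ s → s ⊆ db → DBConsistent s → s = r

/-! ## Valuations (partial maps from variables to constants) -/

abbrev Assignment : Type := Var → Option ℚ≥0

def Assignment.Dom (θ : Assignment) : Set Var := {v | θ v ≠ none}

def Assignment.ExtendsA (μ θ : Assignment) : Prop :=
  ∀ (v : Var) (c : ℚ≥0), θ v = some c → μ v = some c

noncomputable def Assignment.restrict (θ : Assignment) (S : Set Var) : Assignment :=
  fun v => if v ∈ S then θ v else none

def emptyAssignment : Assignment := fun _ => none

/-- Combination of two valuations (the first takes precedence). -/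
def Assignment.comb (θ μ : Assignment) : Assignment :=
  fun v => (θ v).orElse (fun _ => μ v)

def applyTrm (θ : Assignment) : Trm → Trm
  | .var v => (θ v).elim (Trm.var v) Trm.const
  | .const c => .const c

def applyAtom (θ : Assignment) (F : DBAtom) : DBAtom :=
  ⟨F.rel, F.keyArgs.map (applyTrm θ), F.nonkeyArgs.map (applyTrm θ)⟩

def applyQ (θ : Assignment) (q : List DBAtom) : List DBAtom := q.map (applyAtom θ)

def DBAtom.toFact? (F : DBAtom) : Option DBFact := do
  let ks ← F.keyArgs.mapM Trm.const?
  let ns ← F.nonkeyArgs.mapM Trm.const?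
  pure (DBFact.mk F.rel ks ns)

def AtomIn (s : Finset DBFact) (F : DBAtom) : Prop := ∃ f ∈ s, F.toFact? = some f

/-- `(s, θ) ⊨ q`: θ extends to a valuation over dom(θ) ∪ vars(q) mapping all atoms of q into s. -/
def Entails (s : Finset DBFact) (θ : Assignment) (q : List DBAtom) : Prop :=
  ∃ μ : Assignment, μ.Dom = θ.Dom ∪ ↑(qVars q) ∧ μ.ExtendsA θ ∧
    ∀ F ∈ q, AtomIn s (applyAtom μ F)

/-! ## Functional dependencies -/

def FDSatT (N : Set (Var → ℚ≥0)) (X Y : Finset Var) : Prop :=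
  ∀ t₁ ∈ N, ∀ t₂ ∈ N, (∀ x ∈ X, t₁ x = t₂ x) → ∀ y ∈ Y, t₁ y = t₂ y

/-- Standard logical implication of functional dependencies. -/
def FDImp (fds : Set (Finset Var × Finset Var)) (X Y : Finset Var) : Prop :=
  ∀ N : Set (Var → ℚ≥0), (∀ fd ∈ fds, FDSatT N fd.1 fd.2) → FDSatT N X Y

def FDSet (q : List DBAtom) : Set (Finset Var × Finset Var) :=
  {p | ∃ F ∈ q, p = (F.keyVars, F.allVars)}

def keycl (F : DBAtom) (q : List DBAtom) : Set Var :=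
  {x | x ∈ qVars q ∧ FDImp (FDSet (q.erase F)) F.keyVars {x}}

/-! ## Attacks and the attack graph -/

def AdjIn (q : List DBAtom) (a b : Var) : Prop :=
  ∃ G ∈ q, a ∈ G.allVars ∧ b ∈ G.allVars

/-- Atom F attacks variable x in q. -/
def AttacksVar (q : List DBAtom) (F : DBAtom) (x : Var) : Prop :=
  ∃ l : List Var, (∀ v ∈ l, v ∉ keycl F q) ∧
    (∃ h, l.head? = some h ∧ h ∈ F.notkeyVars) ∧
    l.getLast? = some x ∧ l.Chain' (AdjIn q)

def AttacksAtom (q : List DBAtom) (F G : DBAtom) : Prop :=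
  ∃ x ∈ G.allVars, AttacksVar q F x

def Unattacked (q : List DBAtom) (v : Var) : Prop := ∀ F ∈ q, ¬ AttacksVar q F v

/-- The list order of q is a topological sort of its (hence acyclic) attack graph. -/
def IsTopoSort (q : List DBAtom) : Prop :=
  ∀ i j : Fin q.length, q.get i ≠ q.get j →
    AttacksAtom q (q.get i) (q.get j) → (i : ℕ) < (j : ℕ)

/-! ## Embeddings and ∀embeddings (relative to the list order as topological sort) -/

def uVars (q : List DBAtom) (ℓ : ℕ) : Finset Var := qVars (q.take ℓ)

def headKey : List DBAtom → Finset Var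
  | [] => ∅
  | F :: _ => F.keyVars

/-- ℓ-embedding of q in db. -/
def IsLEmb (q : List DBAtom) (db : Finset DBFact) (ℓ : ℕ) (θ : Assignment) : Prop :=
  θ.Dom = ↑(uVars q ℓ) ∧ Entails db θ q

/-- ℓ-∀embedding of q in db. -/
def IsForallEmb (q : List DBAtom) (db : Finset DBFact) : ℕ → Assignment → Prop
  | 0, θ => IsLEmb q db 0 θ ∧ ∀ r, IsRepair db r → Entails r emptyAssignment q
  | (ℓ + 1), θ =>
      IsLEmb q db (ℓ + 1) θ ∧
      (∀ r, IsRepair db r →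
        Entails r (θ.restrict (↑(uVars q ℓ) ∪ ↑(headKey (q.drop ℓ)))) (q.drop ℓ)) ∧
      IsForallEmb q db ℓ (θ.restrict ↑(uVars q ℓ))

/-- An embedding of q in s: a valuation over vars(q) mapping all atoms of q into s. -/
def IsEmbedding (q : List DBAtom) (s : Finset DBFact) (θ : Assignment) : Prop :=
  θ.Dom = ↑(qVars q) ∧ ∀ F ∈ q, AtomIn s (applyAtom θ F)

/-- Superfrugal repair: every embedding of q in r is a ∀embedding of q in db. -/
def Superfrugal (q : List DBAtom) (db r : Finset DBFact) : Prop :=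
  IsRepair db r ∧ ∀ θ, IsEmbedding q r θ → IsForallEmb q db q.length θ

/-! ## FD satisfaction by sets of valuations; maximal consistent subsets (MCS) -/

def AgreeOn (θ₁ θ₂ : Assignment) (X : Finset Var) : Prop := ∀ x ∈ X, θ₁ x = θ₂ x

def SatFD (N : Set Assignment) (X Y : Finset Var) : Prop :=
  ∀ θ₁ ∈ N, ∀ θ₂ ∈ N, AgreeOn θ₁ θ₂ X → AgreeOn θ₁ θ₂ Y

def SatFDs (N : Set Assignment) (q : List DBAtom) : Prop :=
  ∀ fd ∈ FDSet q, SatFD N fd.1 fd.2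

/-- Maximal consistent subset of a set M of embeddings. -/
def IsMCS (q : List DBAtom) (M N : Set Assignment) : Prop :=
  N ⊆ M ∧ SatFDs N q ∧ ∀ N', N ⊆ N' → N' ⊆ M → SatFDs N' q → N' = N

/-! ## Aggregate operators -/

structure AggOp : Type where
  app : Multiset ℚ≥0 → ℚ
  nonneg : ∀ X : Multiset ℚ≥0, X ≠ 0 → 0 ≤ app X

noncomputable def AggOp.appNN (A : AggOp) (X : Multiset ℚ≥0) : ℚ≥0 := (A.app X).toNNRat

def AggOp.Assoc (A : AggOp) : Prop :=
  ∀ X Y : Multiset ℚ≥0, X ≠ 0 → A.app (X + Y) = A.app (A.appNN X ::ₘ Y)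

def AggOp.Mono (A : AggOp) : Prop :=
  ∀ x x' : List ℚ≥0, x ≠ [] → List.Forall₂ (· ≤ ·) x x' →
    ∀ Y : Multiset ℚ≥0, A.app ↑x ≤ A.app (↑x' + Y)

def evalTrm (θ : Assignment) : Trm → ℚ≥0
  | .var v => (θ v).getD 0
  | .const c => c

/-- The multiset of r-values over a (finite) set of valuations. -/
noncomputable def valsOf (N : Set Assignment) (r : Trm) : Multiset ℚ≥0 :=
  if h : N.Finite then h.toFinset.val.map (fun θ => evalTrm θ r) else 0

/-- Primitive numerical term: a (numerical) variable of the query, or a constant. -/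
def PrimTerm (q : List DBAtom) (r : Trm) : Prop :=
  (∃ v, r = Trm.var v ∧ v ∈ qVars q) ∨ (∃ c, r = Trm.const c)

/-! ## Branches and ∀key-embeddings -/

/-- γ is a branch of the ℓ-∀embedding θ. -/
def IsBranch (q : List DBAtom) (db : Finset DBFact) (ℓ : ℕ) (θ γ : Assignment) : Prop :=
  γ.ExtendsA θ ∧
  (∀ v ∈ γ.Dom \ θ.Dom, Unattacked (applyQ θ (q.drop ℓ)) v) ∧
  (∃ μ, IsForallEmb q db q.length μ ∧ μ.ExtendsA γ)

/-- γ is an (ℓ+1)-∀key-embedding: a branch of θ with domain dom(θ) ∪ key(F_{ℓ+1}). -/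
def IsKeyEmb (q : List DBAtom) (db : Finset DBFact) (ℓ : ℕ) (θ γ : Assignment) : Prop :=
  IsBranch q db ℓ θ γ ∧ γ.Dom = θ.Dom ∪ ↑(headKey (q.drop ℓ))

/-- M(θ): all ∀embeddings of q in db extending θ. -/
def Mset (q : List DBAtom) (db : Finset DBFact) (θ : Assignment) : Set Assignment :=
  {μ | IsForallEmb q db q.length μ ∧ μ.ExtendsA θ}

/-! ## Weakly connected components of the attack graph -/

def UndirectedEdge (p : List DBAtom) (F G : DBAtom) : Prop :=
  F ∈ p ∧ G ∈ p ∧ (AttacksAtom p F G ∨ AttacksAtom p G F)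

/-- S is a maximal weakly connected component of the attack graph of p. -/
def IsWCC (p : List DBAtom) (S : Set DBAtom) : Prop :=
  ∃ F₀ ∈ p, S = {G | Relation.ReflTransGen (UndirectedEdge p) F₀ G}

/-! ## rifi, sequential proofs, n-minimality -/

/-- rifi(q, s, V): valuations over V extending to a valuation over vars(q) mapping q into s. -/
def rifi (q : List DBAtom) (s : Finset DBFact) (V : Finset Var) : Set Assignment :=
  {θ | θ.Dom = ↑V ∧ ∃ μ : Assignment, μ.Dom = ↑(qVars q) ∧ μ.ExtendsA θ ∧
      ∀ F ∈ q, AtomIn s (applyAtom μ F)}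

/-- A sequential proof of FD(p) ⊨ Z → w. -/
def IsSeqProof (p : List DBAtom) (Z : Finset Var) (w : Var) (l : List DBAtom) : Prop :=
  (∀ F ∈ l, F ∈ p) ∧
  (∀ i : Fin l.length, (l.get i).keyVars ⊆ Z ∪ qVars (l.take i.1)) ∧
  w ∈ Z ∪ qVars l

/-- n-minimal repair (with X = vars(q)). -/
def NMinimal (q : List DBAtom) (db r : Finset DBFact) : Prop :=
  IsRepair db r ∧
  ¬ ∃ s : Finset DBFact, IsRepair db s ∧
      (∀ θ, IsEmbedding q s θ → IsEmbedding q r θ) ∧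
      (∃ μ, IsEmbedding q r μ ∧ ¬ IsEmbedding q s μ)

/-! ## Descending chains for aggregate operators -/

def DescChain {α β : Type*} [LT β] (F : Multiset α → β) (s t : α) : Prop :=
  ∀ i : ℕ, F (s ::ₘ Multiset.replicate (i + 1) t) < F (s ::ₘ Multiset.replicate i t)

def BoundedBy {α β : Type*} [LT β] (F : Multiset α → β) (s t : α) (m : ℕ → α) : Prop :=
  ∀ i j : ℕ, 1 ≤ j → ∀ k' k : ℕ, k' ≤ k → k ≤ i →
    F (s ::ₘ Multiset.replicate k' t) <
      F (Multiset.replicate j (m i) + (s ::ₘ Multiset.replicate k t))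

def HasBoundedDescChain {α β : Type*} [LT β] (F : Multiset α → β) : Prop :=
  ∃ s t, DescChain F s t ∧ ∃ m : ℕ → α, BoundedBy F s t m

/-! ### Auxiliary development -/

namespace StmtOne

open Classical

/-- The ground fact obtained by evaluating all terms of an atom. -/
def factOf (θ : Assignment) (F : DBAtom) : DBFact :=
  ⟨F.rel, F.keyArgs.map (evalTrm θ), F.nonkeyArgs.map (evalTrm θ)⟩

lemma mem_filterMap_var {l : List Trm} {v : Var} :
    v ∈ l.filterMap Trm.var? ↔ Trm.var v ∈ l := by
  simp only [List.mem_filterMap]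
  constructor
  · rintro ⟨t, ht, h⟩
    cases t with
    | var w => simp only [Trm.var?, Option.some.injEq] at h; subst h; exact ht
    | const c => simp [Trm.var?] at h
  · intro h; exact ⟨Trm.var v, h, rfl⟩

lemma mem_allVars {F : DBAtom} {v : Var} :
    v ∈ F.allVars ↔ Trm.var v ∈ F.keyArgs ∨ Trm.var v ∈ F.nonkeyArgs := by
  rw [DBAtom.allVars, List.mem_toFinset, mem_filterMap_var, List.mem_append]

lemma mem_keyVars {F : DBAtom} {v : Var} :
    v ∈ F.keyVars ↔ Trm.var v ∈ F.keyArgs := by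
  rw [DBAtom.keyVars, List.mem_toFinset, mem_filterMap_var]

lemma keyVars_subset_allVars (F : DBAtom) : F.keyVars ⊆ F.allVars := by
  intro v hv; rw [mem_allVars]; exact Or.inl (mem_keyVars.1 hv)

lemma mem_allVars_of_notkey {F : DBAtom} {v : Var} (h : v ∈ F.notkeyVars) : v ∈ F.allVars :=
  (Finset.mem_sdiff.1 h).1

lemma mem_notkey_or_key {F : DBAtom} {v : Var} (h : v ∈ F.allVars) :
    v ∈ F.keyVars ∨ v ∈ F.notkeyVars := by
  by_cases hk : v ∈ F.keyVars
  · exact Or.inl hk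
  · exact Or.inr (Finset.mem_sdiff.2 ⟨h, hk⟩)

lemma mapM_const?_of_dom (θ : Assignment) (l : List Trm)
    (h : ∀ v, Trm.var v ∈ l → θ v ≠ none) :
    (l.map (applyTrm θ)).mapM Trm.const? = some (l.map (evalTrm θ)) := by
  induction l with
  | nil => rfl
  | cons a l ih =>
    have htail : (l.map (applyTrm θ)).mapM Trm.const? = some (l.map (evalTrm θ)) :=
      ih (fun v hv => h v (List.mem_cons_of_mem _ hv))
    rw [List.map_cons, List.mapM_cons, htail]
    cases a with
    | var v =>
      have hv : θ v ≠ none := h v List.mem_cons_self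
      obtain ⟨c, hc⟩ : ∃ c, θ v = some c := Option.ne_none_iff_exists'.1 hv
      simp [applyTrm, evalTrm, hc, Trm.const?]
    | const c =>
      simp [applyTrm, evalTrm, Trm.const?]

lemma toFact?_eq (A : DBAtom) :
    A.toFact? = (A.keyArgs.mapM Trm.const?).bind
      (fun ks => (A.nonkeyArgs.mapM Trm.const?).bind
        (fun ns => some ⟨A.rel, ks, ns⟩)) := rfl

lemma applyAtom_toFact (θ : Assignment) (F : DBAtom)
    (h : ∀ v ∈ F.allVars, θ v ≠ none) :
    (applyAtom θ F).toFact? = some (factOf θ F) := by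
  have hk := mapM_const?_of_dom θ F.keyArgs
    (fun v hv => h v (mem_allVars.2 (Or.inl hv)))
  have hn := mapM_const?_of_dom θ F.nonkeyArgs
    (fun v hv => h v (mem_allVars.2 (Or.inr hv)))
  rw [toFact?_eq]
  simp only [applyAtom] at *
  rw [hk, hn]
  rfl

lemma toFact?_dom {θ : Assignment} {F : DBAtom} {f : DBFact}
    (h : (applyAtom θ F).toFact? = some f) : ∀ v ∈ F.allVars, θ v ≠ none := by
  intro v hv hnone
  rw [mem_allVars] at hv
  have hvar : ∀ l : List Trm, Trm.var v ∈ l →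
      (l.map (applyTrm θ)).mapM Trm.const? = none := by
    intro l hl
    induction l with
    | nil => simp at hl
    | cons a l ih =>
      rw [List.map_cons, List.mapM_cons]
      rcases List.mem_cons.1 hl with h1 | h1
      · subst h1; simp [applyTrm, hnone, Trm.const?]
      · cases ha : (Trm.const? (applyTrm θ a)) with
        | none => simp [ha]
        | some c => rw [ih h1]; simp [ha]
  rw [toFact?_eq] at h
  simp only [applyAtom] at h
  rcases hv with hv | hv
  · rw [hvar F.keyArgs hv] at h
    simp at h
  · cases hk : (F.keyArgs.map (applyTrm θ)).mapM Trm.const? with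
    | none => rw [hk] at h; simp at h
    | some ks => rw [hk, hvar F.nonkeyArgs hv] at h; simp at h

lemma atomIn_iff (s : Finset DBFact) (θ : Assignment) (F : DBAtom)
    (h : ∀ v ∈ F.allVars, θ v ≠ none) :
    AtomIn s (applyAtom θ F) ↔ factOf θ F ∈ s := by
  constructor
  · rintro ⟨f, hf, heq⟩
    rw [applyAtom_toFact θ F h] at heq
    cases heq; exact hf
  · intro hf
    exact ⟨factOf θ F, hf, applyAtom_toFact θ F h⟩

lemma atomIn_imp {s : Finset DBFact} {θ : Assignment} {F : DBAtom}
    (h : AtomIn s (applyAtom θ F)) :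
    (∀ v ∈ F.allVars, θ v ≠ none) ∧ factOf θ F ∈ s := by
  obtain ⟨f, hf, heq⟩ := h
  have hd := toFact?_dom heq
  exact ⟨hd, (atomIn_iff s θ F hd).1 ⟨f, hf, heq⟩⟩

lemma factOf_congr {θ θ' : Assignment} {F : DBAtom}
    (h : ∀ v ∈ F.allVars, evalTrm θ (Trm.var v) = evalTrm θ' (Trm.var v)) :
    factOf θ F = factOf θ' F := by
  unfold factOf
  congr 1
  · exact List.map_congr_left (fun t ht => by
      cases t with
      | var v => exact h v (mem_allVars.2 (Or.inl ht))
      | const c => rfl)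
  · exact List.map_congr_left (fun t ht => by
      cases t with
      | var v => exact h v (mem_allVars.2 (Or.inr ht))
      | const c => rfl)

lemma factOf_congr' {θ θ' : Assignment} {F : DBAtom}
    (h : ∀ v ∈ F.allVars, θ v = θ' v) : factOf θ F = factOf θ' F :=
  factOf_congr (fun v hv => by simp [evalTrm, h v hv])

lemma eval_agree_of_map_eq {θ θ' : Assignment} {l : List Trm}
    (h : l.map (evalTrm θ) = l.map (evalTrm θ')) :
    ∀ v, Trm.var v ∈ l → evalTrm θ (Trm.var v) = evalTrm θ' (Trm.var v) := by
  intro v hv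
  induction l with
  | nil => simp at hv
  | cons a l ih =>
    simp only [List.map_cons, List.cons.injEq] at h
    rcases List.mem_cons.1 hv with h1 | h1
    · subst h1; exact h.1
    · exact ih h.2 h1

lemma agree_of_factOf_eq {θ θ' : Assignment} {F : DBAtom}
    (h : factOf θ F = factOf θ' F) :
    ∀ v ∈ F.allVars, evalTrm θ (Trm.var v) = evalTrm θ' (Trm.var v) := by
  intro v hv
  have h1 := congrArg DBFact.keyArgs h
  have h2 := congrArg DBFact.nonkeyArgs h
  simp only [factOf] at h1 h2
  rcases mem_allVars.1 hv with hv | hv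
  · exact eval_agree_of_map_eq h1 v hv
  · exact eval_agree_of_map_eq h2 v hv

lemma keyEqual_factOf {θ θ' : Assignment} {F : DBAtom}
    (h : ∀ v ∈ F.keyVars, evalTrm θ (Trm.var v) = evalTrm θ' (Trm.var v)) :
    KeyEqual (factOf θ F) (factOf θ' F) := by
  refine ⟨rfl, ?_⟩
  exact List.map_congr_left (fun t ht => by
    cases t with
    | var v => exact h v (mem_keyVars.2 ht)
    | const c => rfl)

end StmtOne

namespace StmtOne

lemma mem_qVars {q : List DBAtom} {v : Var} :
    v ∈ qVars q ↔ ∃ F ∈ q, v ∈ F.allVars := by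
  induction q with
  | nil => simp [qVars]
  | cons F q ih =>
    simp only [qVars, List.foldr_cons, Finset.mem_union, List.mem_cons]
    rw [show List.foldr (fun F s => F.allVars ∪ s) ∅ q = qVars q from rfl] at *
    constructor
    · rintro (h | h)
      · exact ⟨F, Or.inl rfl, h⟩
      · obtain ⟨G, hG, hv⟩ := ih.1 h
        exact ⟨G, Or.inr hG, hv⟩
    · rintro ⟨G, (rfl | hG), hv⟩
      · exact Or.inl hv
      · exact Or.inr (ih.2 ⟨G, hG, hv⟩)

lemma allVars_subset_qVars {q : List DBAtom} {F : DBAtom} (hF : F ∈ q) :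
    F.allVars ⊆ qVars q := fun v hv => mem_qVars.2 ⟨F, hF, hv⟩

lemma uVars_subset_qVars (q : List DBAtom) (ℓ : ℕ) : uVars q ℓ ⊆ qVars q := by
  intro v hv
  obtain ⟨F, hF, hv⟩ := mem_qVars.1 hv
  exact mem_qVars.2 ⟨F, List.mem_of_mem_take hF, hv⟩

lemma uVars_mono (q : List DBAtom) {ℓ ℓ' : ℕ} (h : ℓ ≤ ℓ') : uVars q ℓ ⊆ uVars q ℓ' := by
  intro v hv
  obtain ⟨F, hF, hv⟩ := mem_qVars.1 hv
  refine mem_qVars.2 ⟨F, ?_, hv⟩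
  have : q.take ℓ = (q.take ℓ').take ℓ := by rw [List.take_take, min_eq_left h]
  rw [this] at hF
  exact List.mem_of_mem_take hF

lemma uVars_length (q : List DBAtom) : uVars q q.length = qVars q := by
  rw [uVars, List.take_length]

lemma mem_qVars_split {q : List DBAtom} (ℓ : ℕ) {v : Var} (h : v ∈ qVars q) :
    v ∈ uVars q ℓ ∨ v ∈ qVars (q.drop ℓ) := by
  obtain ⟨F, hF, hv⟩ := mem_qVars.1 h
  rw [← List.take_append_drop ℓ q, List.mem_append] at hF
  rcases hF with hF | hF
  · exact Or.inl (mem_qVars.2 ⟨F, hF, hv⟩)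
  · exact Or.inr (mem_qVars.2 ⟨F, hF, hv⟩)

lemma qVars_drop_subset (q : List DBAtom) (ℓ : ℕ) : qVars (q.drop ℓ) ⊆ qVars q := by
  intro v hv
  obtain ⟨F, hF, hv⟩ := mem_qVars.1 hv
  exact mem_qVars.2 ⟨F, List.mem_of_mem_drop hF, hv⟩

/- restrict lemmas -/

lemma restrict_apply (θ : Assignment) (S : Set Var) (v : Var) :
    θ.restrict S v = if v ∈ S then θ v else none := rfl

lemma dom_restrict (θ : Assignment) (S : Set Var) :
    (θ.restrict S).Dom = S ∩ θ.Dom := by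
  ext v
  simp only [Assignment.Dom, Set.mem_setOf_eq, Set.mem_inter_iff, restrict_apply]
  by_cases h : v ∈ S <;> simp [h]

lemma restrict_restrict (θ : Assignment) (A B : Set Var) :
    (θ.restrict A).restrict B = θ.restrict (A ∩ B) := by
  funext v
  simp only [restrict_apply, Set.mem_inter_iff]
  by_cases hB : v ∈ B <;> by_cases hA : v ∈ A <;> simp [hA, hB]

lemma restrict_restrict_of_subset (θ : Assignment) {A B : Set Var} (h : B ⊆ A) :
    (θ.restrict A).restrict B = θ.restrict B := by
  rw [restrict_restrict, Set.inter_eq_self_of_subset_right h]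

lemma restrict_extends (θ : Assignment) (S : Set Var) :
    θ.ExtendsA (θ.restrict S) := by
  intro v c h
  rw [restrict_apply] at h
  by_cases hv : v ∈ S
  · rwa [if_pos hv] at h
  · rw [if_neg hv] at h; cases h

lemma restrict_eq_self {θ : Assignment} {S : Set Var} (h : θ.Dom ⊆ S) :
    θ.restrict S = θ := by
  funext v
  rw [restrict_apply]
  by_cases hv : v ∈ S
  · rw [if_pos hv]
  · rw [if_neg hv]
    by_contra hne
    exact hv (h (show v ∈ θ.Dom from fun hn => hne hn.symm))

lemma restrict_some {θ : Assignment} {S : Set Var} {v : Var} {c : ℚ≥0}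
    (h : θ.restrict S v = some c) : θ v = some c ∧ v ∈ S := by
  rw [restrict_apply] at h
  by_cases hv : v ∈ S
  · rw [if_pos hv] at h; exact ⟨h, hv⟩
  · rw [if_neg hv] at h; cases h

lemma mem_dom_iff {θ : Assignment} {v : Var} : v ∈ θ.Dom ↔ ∃ c, θ v = some c := by
  simp [Assignment.Dom, Option.ne_none_iff_exists']

end StmtOne

namespace StmtOne

lemma keyEqual_refl (f : DBFact) : KeyEqual f f := ⟨rfl, rfl⟩
lemma keyEqual_symm {f g : DBFact} (h : KeyEqual f g) : KeyEqual g f := ⟨h.1.symm, h.2.symm⟩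
lemma keyEqual_trans {f g k : DBFact} (h1 : KeyEqual f g) (h2 : KeyEqual g k) :
    KeyEqual f k := ⟨h1.1.trans h2.1, h1.2.trans h2.2⟩

/-- A consistent subset is a repair iff it "covers" every block of db. -/
def Full (db r : Finset DBFact) : Prop := ∀ f ∈ db, ∃ g ∈ r, KeyEqual f g

lemma isRepair_iff {db r : Finset DBFact} :
    IsRepair db r ↔ r ⊆ db ∧ DBConsistent r ∧ Full db r := by
  constructor
  · rintro ⟨hsub, hcons, hmax⟩
    refine ⟨hsub, hcons, fun f hf => ?_⟩
    by_contra hno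
    push_neg at hno
    have hcons' : DBConsistent (insert f r) := by
      intro a ha b hb hab
      rcases Finset.mem_insert.1 ha with ha' | ha' <;>
        rcases Finset.mem_insert.1 hb with hb' | hb'
      · rw [ha', hb']
      · exact absurd (show KeyEqual f b by rw [← ha']; exact hab) (hno b hb')
      · exact absurd (show KeyEqual f a by rw [← hb']; exact keyEqual_symm hab) (hno a ha')
      · exact hcons a ha' b hb' hab
    have := hmax (insert f r) (Finset.subset_insert _ _)
      (Finset.insert_subset hf hsub) hcons'
    have hfr : f ∈ r := this ▸ Finset.mem_insert_self f r
    exact hno f hfr (keyEqual_refl f)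
  · rintro ⟨hsub, hcons, hfull⟩
    refine ⟨hsub, hcons, fun s hrs hsdb hscons => ?_⟩
    apply Finset.Subset.antisymm _ hrs
    intro f hf
    obtain ⟨g, hg, hfg⟩ := hfull f (hsdb hf)
    have : f = g := hscons f hf g (hrs hg) hfg
    exact this ▸ hg

lemma exists_repair (db : Finset DBFact) : ∃ r, IsRepair db r := by
  classical
  have hne : (db.powerset.filter DBConsistent).Nonempty := by
    refine ⟨∅, ?_⟩
    simp only [Finset.mem_filter, Finset.mem_powerset]
    exact ⟨Finset.empty_subset _, fun f hf => absurd hf (Finset.notMem_empty f)⟩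
  obtain ⟨r, hr, hmax⟩ := (db.powerset.filter DBConsistent).exists_max_image
    Finset.card hne
  simp only [Finset.mem_filter, Finset.mem_powerset] at hr
  refine ⟨r, hr.1, hr.2, fun s hrs hsdb hscons => ?_⟩
  have hs : s ∈ db.powerset.filter DBConsistent := by
    simp only [Finset.mem_filter, Finset.mem_powerset]; exact ⟨hsdb, hscons⟩
  exact (Finset.eq_of_subset_of_card_le hrs (hmax s hs)).symm

lemma hybrid_repair {db r1 r2 : Finset DBFact} (h1 : IsRepair db r1) (h2 : IsRepair db r2)
    (RS : RelName → Prop) [DecidablePred RS] :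
    IsRepair db ((r1.filter (fun f => RS f.rel)) ∪ (r2.filter (fun f => ¬ RS f.rel))) := by
  classical
  obtain ⟨h1sub, h1cons, h1full⟩ := isRepair_iff.1 h1
  obtain ⟨h2sub, h2cons, h2full⟩ := isRepair_iff.1 h2
  rw [isRepair_iff]
  refine ⟨?_, ?_, ?_⟩
  · intro f hf
    rcases Finset.mem_union.1 hf with hf | hf
    · exact h1sub (Finset.mem_of_mem_filter _ hf)
    · exact h2sub (Finset.mem_of_mem_filter _ hf)
  · intro f hf g hg hfg
    rcases Finset.mem_union.1 hf with hf | hf <;>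
      rcases Finset.mem_union.1 hg with hg | hg
    · exact h1cons f (Finset.mem_of_mem_filter _ hf) g (Finset.mem_of_mem_filter _ hg) hfg
    · exact absurd ((Finset.mem_filter.1 hg).2)
        (fun h => h (hfg.1 ▸ (Finset.mem_filter.1 hf).2))
    · exact absurd ((Finset.mem_filter.1 hf).2)
        (fun h => h (hfg.1 ▸ (Finset.mem_filter.1 hg).2))
    · exact h2cons f (Finset.mem_of_mem_filter _ hf) g (Finset.mem_of_mem_filter _ hg) hfg
  · intro f hf
    by_cases hrel : RS f.rel
    · obtain ⟨g, hg, hfg⟩ := h1full f hf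
      refine ⟨g, Finset.mem_union_left _ (Finset.mem_filter.2 ⟨hg, ?_⟩), hfg⟩
      rwa [← hfg.1]
    · obtain ⟨g, hg, hfg⟩ := h2full f hf
      refine ⟨g, Finset.mem_union_right _ (Finset.mem_filter.2 ⟨hg, ?_⟩), hfg⟩
      rwa [← hfg.1]

lemma swap_repair {db h0 : Finset DBFact} (hrep : IsRepair db h0) {A B : DBFact}
    (hA : A ∈ h0) (hB : B ∈ db) (hk : KeyEqual A B) :
    IsRepair db (insert B (h0.erase A)) := by
  classical
  obtain ⟨hsub, hcons, hfull⟩ := isRepair_iff.1 hrep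
  rw [isRepair_iff]
  refine ⟨?_, ?_, ?_⟩
  · intro f hf
    rcases Finset.mem_insert.1 hf with rfl | hf
    · exact hB
    · exact hsub (Finset.mem_of_mem_erase hf)
  · intro f hf g hg hfg
    rcases Finset.mem_insert.1 hf with hf' | hf' <;>
      rcases Finset.mem_insert.1 hg with hg' | hg'
    · rw [hf', hg']
    · exfalso
      have hBg : KeyEqual B g := by rw [← hf']; exact hfg
      have hgA : g = A := hcons g (Finset.mem_of_mem_erase hg') A hA
        (keyEqual_symm (keyEqual_trans hk hBg))
      exact (Finset.mem_erase.1 hg').1 hgA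
    · exfalso
      have hfB : KeyEqual f B := by rw [← hg']; exact hfg
      have hfA : f = A := hcons f (Finset.mem_of_mem_erase hf') A hA
        (keyEqual_trans hfB (keyEqual_symm hk))
      exact (Finset.mem_erase.1 hf').1 hfA
    · exact hcons f (Finset.mem_of_mem_erase hf') g (Finset.mem_of_mem_erase hg') hfg
  · intro f hf
    obtain ⟨g, hg, hfg⟩ := hfull f hf
    by_cases hgA : g = A
    · exact ⟨B, Finset.mem_insert_self _ _, keyEqual_trans hfg (hgA ▸ hk)⟩
    · exact ⟨g, Finset.mem_insert_of_mem (Finset.mem_erase.2 ⟨hgA, hg⟩), hfg⟩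

end StmtOne

namespace StmtOne

/-- Totalization of an assignment. -/
def totA (θ : Assignment) : Var → ℚ≥0 := fun v => (θ v).getD 0

lemma totA_eval (θ : Assignment) (v : Var) : totA θ v = evalTrm θ (Trm.var v) := rfl

lemma cross_agree {g : Finset DBFact} (hg : DBConsistent g) {G : DBAtom}
    {θ₁ θ₂ : Assignment} (h1 : factOf θ₁ G ∈ g) (h2 : factOf θ₂ G ∈ g)
    (hkey : ∀ x ∈ G.keyVars, totA θ₁ x = totA θ₂ x) :
    ∀ y ∈ G.allVars, totA θ₁ y = totA θ₂ y := by
  have hke : KeyEqual (factOf θ₁ G) (factOf θ₂ G) :=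
    keyEqual_factOf (fun v hv => hkey v hv)
  have heq : factOf θ₁ G = factOf θ₂ G := hg _ h1 _ h2 hke
  exact fun y hy => agree_of_factOf_eq heq y hy

lemma keycl_agree {q : List DBAtom} {F : DBAtom} {g : Finset DBFact}
    (hg : DBConsistent g) {θ₁ θ₂ : Assignment}
    (hall : ∀ G ∈ q.erase F, factOf θ₁ G ∈ g ∧ factOf θ₂ G ∈ g)
    (hkey : ∀ v ∈ F.keyVars, totA θ₁ v = totA θ₂ v)
    {w : Var} (hw : w ∈ keycl F q) : totA θ₁ w = totA θ₂ w := by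
  obtain ⟨-, himp⟩ := hw
  have hN : ∀ fd ∈ FDSet (q.erase F), FDSatT {totA θ₁, totA θ₂} fd.1 fd.2 := by
    rintro fd ⟨G, hG, rfl⟩
    intro t₁ ht₁ t₂ ht₂ hagr y hy
    obtain ⟨hG1, hG2⟩ := hall G hG
    rcases ht₁ with rfl | ht₁ <;> rcases ht₂ with rfl | ht₂
    · rfl
    · rw [Set.mem_singleton_iff] at ht₂; subst ht₂
      exact cross_agree hg hG1 hG2 hagr y hy
    · rw [Set.mem_singleton_iff] at ht₁; subst ht₁
      exact (cross_agree hg hG1 hG2 (fun x hx => (hagr x hx).symm) y hy).symm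
    · rw [Set.mem_singleton_iff] at ht₁ ht₂; subst ht₁; subst ht₂; rfl
  have := himp {totA θ₁, totA θ₂} hN (totA θ₁) (Set.mem_insert _ _) (totA θ₂)
    (Set.mem_insert_of_mem _ (Set.mem_singleton _)) hkey
  exact this w (Finset.mem_singleton_self w)

lemma key_mem_keycl {q : List DBAtom} {F : DBAtom} (hF : F ∈ q) {v : Var}
    (hv : v ∈ F.keyVars) : v ∈ keycl F q := by
  refine ⟨mem_qVars.2 ⟨F, hF, keyVars_subset_allVars F hv⟩, ?_⟩
  intro N _ t₁ ht₁ t₂ ht₂ hagr y hy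
  rw [Finset.mem_singleton] at hy
  subst hy
  exact hagr _ hv

lemma attacks_of_notkey {q : List DBAtom} {F : DBAtom} {w : Var}
    (h1 : w ∈ F.notkeyVars) (h2 : w ∉ keycl F q) : AttacksVar q F w := by
  refine ⟨[w], ?_, ⟨w, rfl, h1⟩, rfl, List.isChain_singleton w⟩
  intro v hv
  rw [List.mem_singleton] at hv
  subst hv
  exact h2

lemma mem_of_getLast'' {α : Type*} {l : List α} {x : α} (h : l.getLast? = some x) : x ∈ l := by
  induction l with
  | nil => simp at h
  | cons a l ih =>
    cases l with
    | nil =>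
      simp only [List.getLast?_singleton, Option.some.injEq] at h
      simp [h]
    | cons b l' =>
      rw [List.getLast?_cons_cons] at h
      exact List.mem_cons_of_mem _ (ih h)

lemma attacks_not_keycl {q : List DBAtom} {F : DBAtom} {x : Var}
    (h : AttacksVar q F x) : x ∉ keycl F q := by
  obtain ⟨l, hnk, -, hlast, -⟩ := h
  have hx : x ∈ l := mem_of_getLast'' hlast
  exact hnk x hx

lemma attacks_extend {q : List DBAtom} {F : DBAtom} {u v : Var}
    (h : AttacksVar q F u) (hadj : AdjIn q u v) (hv : v ∉ keycl F q) :
    AttacksVar q F v := by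
  obtain ⟨l, hnk, ⟨hd, hhd, hdnk⟩, hlast, hchain⟩ := h
  refine ⟨l ++ [v], ?_, ⟨hd, ?_, hdnk⟩, ?_, ?_⟩
  · intro x hx
    rcases List.mem_append.1 hx with hx | hx
    · exact hnk x hx
    · rw [List.mem_singleton] at hx; subst hx; exact hv
  · rw [List.head?_append, hhd]; rfl
  · exact List.getLast?_concat
  · refine List.isChain_append.2 ⟨hchain, List.isChain_singleton v, ?_⟩
    intro x hx y hy
    simp only [List.head?_cons, Option.mem_def, Option.some.injEq] at hy
    subst hy
    rw [hlast, Option.mem_def, Option.some.injEq] at hx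
    subst hx
    exact hadj

end StmtOne

namespace StmtOne

lemma nodup_of_sjf {q : List DBAtom} (h : SelfJoinFree q) : q.Nodup :=
  List.Nodup.of_map _ h

lemma rel_inj {q : List DBAtom} (hsjf : SelfJoinFree q) {F G : DBAtom}
    (hF : F ∈ q) (hG : G ∈ q) (h : F.rel = G.rel) : F = G :=
  List.inj_on_of_nodup_map hsjf hF hG h

lemma no_back_attack {q : List DBAtom} (hsjf : SelfJoinFree q) (htopo : IsTopoSort q)
    {ℓ ℓ' : ℕ} (hle : ℓ' ≤ ℓ) {F G : DBAtom} (hF : F ∈ q.drop ℓ) (hG : G ∈ q.take ℓ')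
    (hatt : AttacksAtom q F G) : False := by
  obtain ⟨i, hi, hFi⟩ := List.mem_iff_getElem.1 hF
  obtain ⟨i', hi', hGi⟩ := List.mem_iff_getElem.1 hG
  rw [List.getElem_drop] at hFi
  have hi'len : i' < q.length := lt_of_lt_of_le hi' (by
    rw [List.length_take]; exact min_le_right _ _)
  have hi'lt : i' < ℓ' := lt_of_lt_of_le hi' (by
    rw [List.length_take]; exact min_le_left _ _)
  rw [List.getElem_take] at hGi
  have hlen : ℓ + i < q.length := by
    have := hi; rwa [List.length_drop, lt_tsub_iff_left] at this
  have hne : q.get ⟨ℓ + i, hlen⟩ ≠ q.get ⟨i', hi'len⟩ := by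
    intro heq
    have := (List.Nodup.getElem_inj_iff (nodup_of_sjf hsjf)).1 (by
      simpa [List.get_eq_getElem] using heq)
    omega
  have hatt' : AttacksAtom q (q.get ⟨ℓ + i, hlen⟩) (q.get ⟨i', hi'len⟩) := by
    simpa [List.get_eq_getElem, hFi, hGi] using hatt
  have := htopo ⟨ℓ + i, hlen⟩ ⟨i', hi'len⟩ hne hatt'
  simp only at this
  omega

lemma pinned_not_attacked {q : List DBAtom} (hsjf : SelfJoinFree q) (htopo : IsTopoSort q)
    {ℓ : ℕ} (hlen : ℓ < q.length) {F : DBAtom} (hF : F ∈ q.drop ℓ)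
    {v : Var} (hv : v ∈ uVars q ℓ ∨ v ∈ headKey (q.drop ℓ)) :
    ¬ AttacksVar q F v := by
  intro hatt
  rcases hv with hv | hv
  · obtain ⟨G, hG, hvG⟩ := mem_qVars.1 hv
    exact no_back_attack hsjf htopo (le_refl ℓ) hF hG ⟨v, hvG, hatt⟩
  · have hdrop : q.drop ℓ = q[ℓ] :: q.drop (ℓ + 1) := List.drop_eq_getElem_cons hlen
    rw [hdrop] at hv
    simp only [headKey] at hv
    by_cases hFeq : F = q[ℓ]
    · subst hFeq
      exact attacks_not_keycl hatt (key_mem_keycl (List.mem_of_mem_drop hF) hv)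
    · have hF' : F ∈ q.drop (ℓ + 1) := by
        rw [hdrop] at hF
        rcases List.mem_cons.1 hF with h | h
        · exact absurd h hFeq
        · exact h
      have hG : q[ℓ] ∈ q.take (ℓ + 1) := by
        rw [List.take_succ]
        refine List.mem_append.2 (Or.inr ?_)
        simp [List.getElem?_eq_getElem hlen]
      exact no_back_attack hsjf htopo (le_refl (ℓ + 1)) hF' hG
        ⟨v, keyVars_subset_allVars _ hv, hatt⟩

end StmtOne

namespace StmtOne

def EmbSet (q : List DBAtom) (s : Finset DBFact) : Set Assignment := {θ | IsEmbedding q s θ}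

lemma consistent_subset {s t : Finset DBFact} (h : s ⊆ t) (ht : DBConsistent t) :
    DBConsistent s := fun f hf g hg hfg => ht f (h hf) g (h hg) hfg

lemma emb_some {q : List DBAtom} {s : Finset DBFact} {θ : Assignment}
    (h : IsEmbedding q s θ) {v : Var} (hv : v ∈ qVars q) : ∃ c, θ v = some c := by
  have : v ∈ θ.Dom := h.1 ▸ (by exact_mod_cast hv)
  exact mem_dom_iff.1 this

lemma emb_ne_none {q : List DBAtom} {s : Finset DBFact} {θ : Assignment}
    (h : IsEmbedding q s θ) {F : DBAtom} (hF : F ∈ q) :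
    ∀ v ∈ F.allVars, θ v ≠ none := by
  intro v hv
  obtain ⟨c, hc⟩ := emb_some h (mem_qVars.2 ⟨F, hF, hv⟩)
  simp [hc]

lemma emb_fact {q : List DBAtom} {s : Finset DBFact} {θ : Assignment}
    (h : IsEmbedding q s θ) {F : DBAtom} (hF : F ∈ q) : factOf θ F ∈ s :=
  (atomIn_iff s θ F (emb_ne_none h hF)).1 (h.2 F hF)

lemma emb_none {q : List DBAtom} {s : Finset DBFact} {θ : Assignment}
    (h : IsEmbedding q s θ) {v : Var} (hv : v ∉ qVars q) : θ v = none := by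
  by_contra hne
  have : v ∈ θ.Dom := hne
  rw [h.1] at this
  exact hv (by exact_mod_cast this)

lemma agree_of_keyEqual {θ₁ θ₂ : Assignment} {F : DBAtom}
    (h : KeyEqual (factOf θ₁ F) (factOf θ₂ F)) :
    ∀ v ∈ F.keyVars, totA θ₁ v = totA θ₂ v := by
  intro v hv
  have := h.2
  simp only [factOf] at this
  exact eval_agree_of_map_eq this v (mem_keyVars.1 hv)

lemma option_eq_of_totA {θ₁ θ₂ : Assignment} {v : Var}
    (h1 : θ₁ v ≠ none) (h2 : θ₂ v ≠ none) (h : totA θ₁ v = totA θ₂ v) :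
    θ₁ v = θ₂ v := by
  obtain ⟨c, hc⟩ := Option.ne_none_iff_exists'.1 h1
  obtain ⟨c', hc'⟩ := Option.ne_none_iff_exists'.1 h2
  rw [hc, hc']
  simp only [totA, hc, hc', Option.getD_some] at h
  rw [h]

lemma keycl_subset_qVars {q : List DBAtom} {F : DBAtom} {w : Var}
    (h : w ∈ keycl F q) : w ∈ qVars q := h.1

lemma dom_empty : emptyAssignment.Dom = ∅ := by
  ext v; simp [Assignment.Dom, emptyAssignment]

lemma entails_of_embedding {q : List DBAtom} {s : Finset DBFact} {θ : Assignment}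
    (h : IsEmbedding q s θ) : Entails s emptyAssignment q := by
  refine ⟨θ, ?_, ?_, ?_⟩
  · rw [dom_empty, h.1, Set.empty_union]
  · intro v c hc; simp [emptyAssignment] at hc
  · exact h.2

end StmtOne

namespace StmtOne

open scoped Classical

lemma core_no_block {q : List DBAtom} (hsjf : SelfJoinFree q) (htopo : IsTopoSort q)
    {db s₀ : Finset DBFact} (hs₀ : IsRepair db s₀)
    (hmin : ∀ h : Finset DBFact, IsRepair db h → EmbSet q h ⊆ EmbSet q s₀ →
      EmbSet q s₀ ⊆ EmbSet q h)
    {θ : Assignment} (hθ : IsEmbedding q s₀ θ)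
    {ℓ : ℕ} (hℓ : ℓ < q.length)
    {rh : Finset DBFact} (hrh : IsRepair db rh) :
    Entails rh (θ.restrict (↑(uVars q ℓ) ∪ ↑(headKey (q.drop ℓ)))) (q.drop ℓ) := by
  classical
  by_contra hblock
  set S : Set Var := ↑(uVars q ℓ) ∪ ↑(headKey (q.drop ℓ)) with hSdef
  set τ : Assignment := θ.restrict S with hτdef
  set RS : RelName → Prop := fun R => ∃ F ∈ q.drop ℓ, F.rel = R with hRSdef
  have hs₀db : s₀ ⊆ db := hs₀.1
  have hdropcons : q.drop ℓ = q[ℓ] :: q.drop (ℓ + 1) := List.drop_eq_getElem_cons hℓ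
  have hheadkey : headKey (q.drop ℓ) = (q[ℓ]'hℓ).keyVars := by rw [hdropcons]; rfl
  have hSsub : S ⊆ (↑(qVars q) : Set Var) := by
    intro v hv
    rcases hv with hv | hv
    · exact_mod_cast uVars_subset_qVars q ℓ (by exact_mod_cast hv)
    · rw [hheadkey] at hv
      have : v ∈ (q[ℓ]'hℓ).allVars := keyVars_subset_allVars _ (by exact_mod_cast hv)
      exact_mod_cast allVars_subset_qVars (q.getElem_mem hℓ) this
  have hτsome : ∀ v ∈ S, τ v = θ v := fun v hv => if_pos hv
  have hτDom : τ.Dom = S := by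
    rw [hτdef, dom_restrict, hθ.1]
    exact Set.inter_eq_left.2 hSsub
  -- candidate predicate
  set P : Finset DBFact → Prop := fun h =>
    IsRepair db h ∧ (∀ f ∈ h, ¬ RS f.rel → f ∈ s₀) ∧ (∀ f ∈ s₀, ¬ RS f.rel → f ∈ h) ∧
      ¬ Entails h τ (q.drop ℓ) with hPdef
  set C : Finset (Finset DBFact) := db.powerset.filter P with hCdef
  -- the hybrid witness
  have hHC : (rh.filter (fun f => RS f.rel) ∪ s₀.filter (fun f => ¬ RS f.rel)) ∈ C := by
    have hHrep := hybrid_repair hrh hs₀ RS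
    rw [hCdef, Finset.mem_filter, Finset.mem_powerset]
    refine ⟨hHrep.1, hHrep, ?_, ?_, ?_⟩
    · intro f hf hrel
      rcases Finset.mem_union.1 hf with hf | hf
      · exact absurd (Finset.mem_filter.1 hf).2 hrel
      · exact Finset.mem_of_mem_filter _ hf
    · intro f hf hrel
      exact Finset.mem_union_right _ (Finset.mem_filter.2 ⟨hf, hrel⟩)
    · rintro ⟨μ, h1, h2, h3⟩
      refine hblock ⟨μ, h1, h2, fun F hF => ?_⟩
      obtain ⟨hdomF, hfF⟩ := atomIn_imp (h3 F hF)
      refine (atomIn_iff _ _ _ hdomF).2 ?_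
      rcases Finset.mem_union.1 hfF with hfF | hfF
      · exact Finset.mem_of_mem_filter _ hfF
      · exact absurd (show RS (factOf μ F).rel from ⟨F, hF, rfl⟩)
          (Finset.mem_filter.1 hfF).2
  obtain ⟨h, hhC, hhmin⟩ := C.exists_min_image (fun t => (t \ s₀).card) ⟨_, hHC⟩
  rw [hCdef, Finset.mem_filter, Finset.mem_powerset] at hhC
  obtain ⟨hhdb, hhrep, hcond1, hcond2, hhblock⟩ := hhC
  -- MAIN CLAIM: every embedding of h is an embedding of s₀
  have hEmb : EmbSet q h ⊆ EmbSet q s₀ := by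
    intro θ' hθ'
    by_contra hnot
    have hexFj : ∃ Fj ∈ q, factOf θ' Fj ∉ s₀ := by
      by_contra hallin
      push_neg at hallin
      exact hnot ⟨hθ'.1, fun F hF =>
        (atomIn_iff _ _ _ (emb_ne_none hθ' hF)).2 (hallin F hF)⟩
    obtain ⟨Fj, hFjq, hAhns⟩ := hexFj
    have hAhh : factOf θ' Fj ∈ h := emb_fact hθ' hFjq
    have hFjRS : RS Fj.rel := by
      by_contra hn
      exact hAhns (hcond1 _ hAhh hn)
    have hFjdrop : Fj ∈ q.drop ℓ := by
      obtain ⟨G, hG, hGrel⟩ := hFjRS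
      rwa [rel_inj hsjf (List.mem_of_mem_drop hG) hFjq hGrel] at hG
    obtain ⟨As, hAss, hkeyAhAs⟩ := (isRepair_iff.1 hs₀).2.2 (factOf θ' Fj) (hhdb hAhh)
    have hAsne : As ≠ factOf θ' Fj := fun he => hAhns (he ▸ hAss)
    have hAsnh : As ∉ h := by
      intro hin
      exact hAsne (hhrep.2.1 As hin _ hAhh (keyEqual_symm hkeyAhAs))
    have hh'rep : IsRepair db (insert As (h.erase (factOf θ' Fj))) :=
      swap_repair hhrep hAhh (hs₀db hAss) hkeyAhAs
    have hcard : ((insert As (h.erase (factOf θ' Fj))) \ s₀).card < (h \ s₀).card := by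
      have hsub : (insert As (h.erase (factOf θ' Fj))) \ s₀ ⊆ (h \ s₀).erase (factOf θ' Fj) := by
        intro f hf
        obtain ⟨hf1, hf2⟩ := Finset.mem_sdiff.1 hf
        rcases Finset.mem_insert.1 hf1 with rfl | hf1
        · exact absurd hAss hf2
        · exact Finset.mem_erase.2 ⟨(Finset.mem_erase.1 hf1).1,
            Finset.mem_sdiff.2 ⟨Finset.mem_of_mem_erase hf1, hf2⟩⟩
      calc ((insert As (h.erase (factOf θ' Fj))) \ s₀).card
          ≤ ((h \ s₀).erase (factOf θ' Fj)).card := Finset.card_le_card hsub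
        _ < (h \ s₀).card := by
            apply Finset.card_erase_lt_of_mem
            exact Finset.mem_sdiff.2 ⟨hAhh, hAhns⟩
    have hEnt' : Entails (insert As (h.erase (factOf θ' Fj))) τ (q.drop ℓ) := by
      by_contra hno
      have hPh' : P (insert As (h.erase (factOf θ' Fj))) := by
        refine ⟨hh'rep, ?_, ?_, hno⟩
        · intro f hf hrel
          rcases Finset.mem_insert.1 hf with rfl | hf
          · exact hAss
          · exact hcond1 f (Finset.mem_of_mem_erase hf) hrel
        · intro f hf hrel
          have hfh : f ∈ h := hcond2 f hf hrel
          have hfne : f ≠ factOf θ' Fj := by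
            intro he
            exact hrel (by rw [he]; exact hFjRS)
          exact Finset.mem_insert_of_mem (Finset.mem_erase.2 ⟨hfne, hfh⟩)
      have hmem : (insert As (h.erase (factOf θ' Fj))) ∈ C := by
        rw [hCdef, Finset.mem_filter, Finset.mem_powerset]
        exact ⟨hh'rep.1, hPh'⟩
      exact absurd (hhmin _ hmem) (not_le.2 hcard)
    obtain ⟨μ, hμDom, hμext, hμatoms⟩ := hEnt'
    have hμsome : ∀ v ∈ qVars q, μ v ≠ none := by
      intro v hv
      rcases mem_qVars_split ℓ hv with hvu | hvd
      · have hvS : v ∈ S := Or.inl (by exact_mod_cast hvu)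
        obtain ⟨c, hc⟩ := emb_some hθ hv
        have : μ v = some c := hμext v c (by rw [hτsome v hvS, hc])
        simp [this]
      · have : v ∈ μ.Dom := by
          rw [hμDom]
          exact Or.inr (by exact_mod_cast hvd)
        exact this
    -- values of μ on the prefix agree with θ
    have hμθ : ∀ v ∈ uVars q ℓ, μ v = θ v := by
      intro v hv
      have hvS : v ∈ S := Or.inl (by exact_mod_cast hv)
      obtain ⟨c, hc⟩ := emb_some hθ (uVars_subset_qVars q ℓ hv)
      rw [hμext v c (by rw [hτsome v hvS, hc]), hc]
    -- case split on whether μ maps Fj to As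
    by_cases hAsj : factOf μ Fj = As
    case neg =>
      refine hhblock ⟨μ, hμDom, hμext, fun F hF => ?_⟩
      obtain ⟨hdomF, hfF⟩ := atomIn_imp (hμatoms F hF)
      refine (atomIn_iff _ _ _ hdomF).2 ?_
      rcases Finset.mem_insert.1 hfF with he | hfF
      · exfalso
        by_cases hFFj : F = Fj
        · exact hAsj (hFFj ▸ he)
        · have hrel : F.rel = Fj.rel := by
            have h1 : (factOf μ F).rel = F.rel := rfl
            have h2 : As.rel = (factOf θ' Fj).rel := hkeyAhAs.1.symm
            rw [← h1, he, h2]; rfl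
          exact hFFj (rel_inj hsjf (List.mem_of_mem_drop hF) hFjq hrel)
      · exact Finset.mem_of_mem_erase hfF
    case pos =>
    have hgcons : DBConsistent (h.erase (factOf θ' Fj)) :=
      consistent_subset (Finset.erase_subset _ _) hhrep.2.1
    -- all atoms other than Fj are mapped into g by both μ and θ'
    have hall : ∀ G ∈ q.erase Fj,
        factOf μ G ∈ h.erase (factOf θ' Fj) ∧ factOf θ' G ∈ h.erase (factOf θ' Fj) := by
      intro G hG
      have hGq : G ∈ q := List.mem_of_mem_erase hG
      have hGne : G ≠ Fj := by
        have := List.Nodup.mem_erase_iff (nodup_of_sjf hsjf) |>.1 hG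
        exact this.1
      have hGrelne : G.rel ≠ Fj.rel := fun hre => hGne (rel_inj hsjf hGq hFjq hre)
      constructor
      · have hGq' := hGq
        rw [← List.take_append_drop ℓ q, List.mem_append] at hGq'
        rcases hGq' with hGtake | hGdrop
        · -- prefix atom: μ agrees with θ
          have hagree : ∀ v ∈ G.allVars, μ v = θ v := fun v hv =>
            hμθ v (mem_qVars.2 ⟨G, hGtake, hv⟩)
          have heq : factOf μ G = factOf θ G := factOf_congr' hagree
          have hGs₀ : factOf θ G ∈ s₀ := emb_fact hθ hGq
          have hGRS : ¬ RS G.rel := by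
            rintro ⟨G', hG', hG'rel⟩
            have hGG' : G' = G := rel_inj hsjf (List.mem_of_mem_drop hG') hGq hG'rel
            subst hGG'
            exact List.disjoint_take_drop (nodup_of_sjf hsjf) (le_refl ℓ) hGtake hG'
          have hGh : factOf θ G ∈ h := hcond2 _ hGs₀ hGRS
          refine heq ▸ Finset.mem_erase.2 ⟨?_, hGh⟩
          intro he
          exact hGRS (by rw [show G.rel = (factOf θ G).rel from rfl, he]; exact hFjRS)
        · -- suffix atom ≠ Fj
          obtain ⟨hdomG, hfG⟩ := atomIn_imp (hμatoms G hGdrop)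
          rcases Finset.mem_insert.1 hfG with he | hfG
          · exfalso
            have : G.rel = Fj.rel := by
              have h2 : As.rel = (factOf θ' Fj).rel := hkeyAhAs.1.symm
              rw [show G.rel = (factOf μ G).rel from rfl, he, h2]; rfl
            exact hGrelne this
          · exact hfG
      · refine Finset.mem_erase.2 ⟨?_, emb_fact hθ' hGq⟩
        intro he
        exact hGrelne (by rw [show G.rel = (factOf θ' G).rel from rfl, he]; rfl)
    have hkeyagree : ∀ v ∈ Fj.keyVars, totA μ v = totA θ' v := by
      have hKE : KeyEqual (factOf μ Fj) (factOf θ' Fj) := by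
        rw [hAsj]
        exact keyEqual_symm hkeyAhAs
      exact agree_of_keyEqual hKE
    have hkeycl : ∀ w ∈ keycl Fj q, μ w = θ' w := by
      intro w hw
      have htot := keycl_agree hgcons hall hkeyagree hw
      refine option_eq_of_totA (hμsome w (keycl_subset_qVars hw)) ?_ htot
      obtain ⟨c, hc⟩ := emb_some hθ' (keycl_subset_qVars hw)
      simp [hc]
    -- key agreement as options
    have hkeyopt : ∀ v ∈ Fj.keyVars, μ v = θ' v := by
      intro v hv
      refine option_eq_of_totA
        (hμsome v (mem_qVars.2 ⟨Fj, hFjq, keyVars_subset_allVars _ hv⟩)) ?_ (hkeyagree v hv)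
      obtain ⟨c, hc⟩ := emb_some hθ' (mem_qVars.2 ⟨Fj, hFjq, keyVars_subset_allVars _ hv⟩)
      simp [hc]
    -- the patched valuation
    set D : Set Var := τ.Dom ∪ ↑(qVars (q.drop ℓ)) with hDdef
    set ν : Assignment := fun v =>
      if v ∈ D then (if AttacksVar q Fj v then θ' v else μ v) else none with hνdef
    have hDq : D ⊆ (↑(qVars q) : Set Var) := by
      rw [hDdef, hτDom]
      intro v hv
      rcases hv with hv | hv
      · exact hSsub hv
      · exact_mod_cast qVars_drop_subset q ℓ (by exact_mod_cast hv)
    have hνDom : ν.Dom = τ.Dom ∪ ↑(qVars (q.drop ℓ)) := by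
      ext v
      simp only [Assignment.Dom, Set.mem_setOf_eq, hνdef]
      by_cases hvD : v ∈ D
      · rw [if_pos hvD]
        have hvq : v ∈ qVars q := by exact_mod_cast hDq hvD
        constructor
        · intro _; exact hvD
        · intro _
          by_cases hvZ : AttacksVar q Fj v
          · rw [if_pos hvZ]
            obtain ⟨c, hc⟩ := emb_some hθ' hvq
            simp [hc]
          · rw [if_neg hvZ]
            exact hμsome v hvq
      · rw [if_neg hvD]
        simp only [ne_eq, not_true_eq_false, false_iff]
        exact fun hc => hvD hc
    have hνext : ν.ExtendsA τ := by
      intro v c hvc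
      have hvτ := restrict_some hvc
      obtain ⟨hθv, hvS⟩ := hvτ
      have hvD : v ∈ D := by
        rw [hDdef]
        exact Or.inl (by rw [hτDom]; exact hvS)
      have hvZ : ¬ AttacksVar q Fj v := by
        apply pinned_not_attacked hsjf htopo hℓ hFjdrop
        rcases hvS with hv | hv
        · exact Or.inl (by exact_mod_cast hv)
        · exact Or.inr (by exact_mod_cast hv)
      rw [hνdef]
      simp only [if_pos hvD, if_neg hvZ]
      exact hμext v c hvc
    have hνatoms : ∀ F ∈ q.drop ℓ, AtomIn h (applyAtom ν F) := by
      intro F hF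
      have hFq := List.mem_of_mem_drop hF
      have hvarD : ∀ v ∈ F.allVars, v ∈ D := fun v hv =>
        Or.inr (by exact_mod_cast mem_qVars.2 ⟨F, hF, hv⟩)
      by_cases hZF : ∃ u ∈ F.allVars, AttacksVar q Fj u
      · obtain ⟨u, hu, huZ⟩ := hZF
        have hagree : ∀ v ∈ F.allVars, ν v = θ' v := by
          intro v hv
          rw [hνdef]
          simp only [if_pos (hvarD v hv)]
          by_cases hvZ : AttacksVar q Fj v
          · rw [if_pos hvZ]
          · rw [if_neg hvZ]
            have hvk : v ∈ keycl Fj q := by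
              by_contra hnk
              exact hvZ (attacks_extend huZ ⟨F, hFq, hu, hv⟩ hnk)
            exact hkeycl v hvk
        have heq : factOf ν F = factOf θ' F := factOf_congr' hagree
        refine (atomIn_iff _ _ _ ?_).2 (heq ▸ emb_fact hθ' hFq)
        intro v hv
        rw [hagree v hv]
        exact emb_ne_none hθ' hFq v hv
      · push_neg at hZF
        have hagree : ∀ v ∈ F.allVars, ν v = μ v := by
          intro v hv
          rw [hνdef]
          simp only [if_pos (hvarD v hv), if_neg (hZF v hv)]
        have heq : factOf ν F = factOf μ F := factOf_congr' hagree
        by_cases hFFj : F = Fj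
        · exfalso
          subst hFFj
          have hagree2 : ∀ v ∈ F.allVars, μ v = θ' v := by
            intro v hv
            rcases mem_notkey_or_key hv with hk | hnk'
            · exact hkeyopt v hk
            · by_cases hc : v ∈ keycl F q
              · exact hkeycl v hc
              · exact absurd (attacks_of_notkey hnk' hc) (hZF v hv)
          exact hAsne (by rw [← hAsj]; exact factOf_congr' hagree2)
        · obtain ⟨hdomF, hfF⟩ := atomIn_imp (hμatoms F hF)
          have hfh : factOf μ F ∈ h := by
            rcases Finset.mem_insert.1 hfF with he | hfF
            · exfalso
              have hrel : F.rel = Fj.rel := by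
                have h2 : As.rel = (factOf θ' Fj).rel := hkeyAhAs.1.symm
                rw [show F.rel = (factOf μ F).rel from rfl, he, h2]; rfl
              exact hFFj (rel_inj hsjf hFq hFjq hrel)
            · exact Finset.mem_of_mem_erase hfF
          refine (atomIn_iff _ _ _ ?_).2 (heq ▸ hfh)
          intro v hv
          rw [hagree v hv]
          exact hdomF v hv
    exact hhblock ⟨ν, hνDom, hνext, hνatoms⟩
  -- h retains θ, contradiction with blocking
  have hθh : IsEmbedding q h θ := hmin h hhrep hEmb hθ
  refine hhblock ⟨θ.restrict (τ.Dom ∪ ↑(qVars (q.drop ℓ))), ?_, ?_, ?_⟩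
  · rw [dom_restrict, hθ.1]
    apply Set.inter_eq_left.2
    rw [hτDom]
    intro v hv
    rcases hv with hv | hv
    · exact hSsub hv
    · exact_mod_cast qVars_drop_subset q ℓ (by exact_mod_cast hv)
  · intro v c hvc
    obtain ⟨hθv, hvS⟩ := restrict_some hvc
    have hvD : v ∈ τ.Dom ∪ (↑(qVars (q.drop ℓ)) : Set Var) :=
      Or.inl (by rw [hτDom]; exact hvS)
    rw [restrict_apply, if_pos hvD]
    exact hθv
  · intro F hF
    have hFq := List.mem_of_mem_drop hF
    have hvarD : ∀ v ∈ F.allVars, v ∈ τ.Dom ∪ (↑(qVars (q.drop ℓ)) : Set Var) :=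
      fun v hv => Or.inr (by exact_mod_cast mem_qVars.2 ⟨F, hF, hv⟩)
    have hagree : ∀ v ∈ F.allVars,
        θ.restrict (τ.Dom ∪ ↑(qVars (q.drop ℓ))) v = θ v := by
      intro v hv
      rw [restrict_apply, if_pos (hvarD v hv)]
    have heq : factOf (θ.restrict (τ.Dom ∪ ↑(qVars (q.drop ℓ)))) F = factOf θ F :=
      factOf_congr' hagree
    refine (atomIn_iff _ _ _ ?_).2 (heq ▸ emb_fact hθh hFq)
    intro v hv
    rw [hagree v hv]
    exact emb_ne_none hθh hFq v hv

end StmtOne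

namespace StmtOne

lemma isLEmb_restrict {q : List DBAtom} {db s₀ : Finset DBFact} (hsub : s₀ ⊆ db)
    {θ : Assignment} (hθ : IsEmbedding q s₀ θ) (ℓ : ℕ) :
    IsLEmb q db ℓ (θ.restrict ↑(uVars q ℓ)) := by
  constructor
  · rw [dom_restrict, hθ.1]
    exact Set.inter_eq_left.2 (by exact_mod_cast uVars_subset_qVars q ℓ)
  · refine ⟨θ, ?_, restrict_extends θ _, ?_⟩
    · rw [hθ.1, dom_restrict, hθ.1,
        Set.union_eq_right.2 (Set.inter_subset_right)]
    · intro F hF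
      exact (atomIn_iff _ _ _ (emb_ne_none hθ hF)).2 (hsub (emb_fact hθ hF))

lemma forall_emb {q : List DBAtom} (hsjf : SelfJoinFree q) (htopo : IsTopoSort q)
    {db s₀ : Finset DBFact} (hs₀ : IsRepair db s₀)
    (hmin : ∀ h : Finset DBFact, IsRepair db h → EmbSet q h ⊆ EmbSet q s₀ →
      EmbSet q s₀ ⊆ EmbSet q h)
    (hcert : ∀ r', IsRepair db r' → Entails r' emptyAssignment q)
    {θ : Assignment} (hθ : IsEmbedding q s₀ θ) :
    ∀ ℓ, ℓ ≤ q.length → IsForallEmb q db ℓ (θ.restrict ↑(uVars q ℓ)) := by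
  intro ℓ
  induction ℓ with
  | zero =>
    intro _
    exact ⟨isLEmb_restrict hs₀.1 hθ 0, fun r' hr' => hcert r' hr'⟩
  | succ ℓ ih =>
    intro hle
    have hℓ : ℓ < q.length := lt_of_lt_of_le (Nat.lt_succ_self ℓ) hle
    have hkeysub : (headKey (q.drop ℓ) : Set Var) ⊆ ↑(uVars q (ℓ + 1)) := by
      have hheadkey : headKey (q.drop ℓ) = (q[ℓ]'hℓ).keyVars := by
        rw [List.drop_eq_getElem_cons hℓ]; rfl
      rw [hheadkey]
      have hmem : (q[ℓ]'hℓ) ∈ q.take (ℓ + 1) := by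
        rw [List.take_succ]
        refine List.mem_append.2 (Or.inr ?_)
        simp [List.getElem?_eq_getElem hℓ]
      intro v hv
      have : v ∈ (q[ℓ]'hℓ).allVars := keyVars_subset_allVars _ (by exact_mod_cast hv)
      exact_mod_cast mem_qVars.2 ⟨_, hmem, this⟩
    have husub : (↑(uVars q ℓ) : Set Var) ⊆ ↑(uVars q (ℓ + 1)) := by
      exact_mod_cast uVars_mono q (Nat.le_succ ℓ)
    refine ⟨isLEmb_restrict hs₀.1 hθ (ℓ + 1), ?_, ?_⟩
    · intro r' hr'
      rw [restrict_restrict_of_subset θ (Set.union_subset husub hkeysub)]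
      exact core_no_block hsjf htopo hs₀ hmin hθ hℓ hr'
    · rw [restrict_restrict_of_subset θ husub]
      exact ih (le_of_lt (Nat.lt_of_succ_le hle))

end StmtOne


/-- For every repair r there is a superfrugal repair r* whose answers
are contained in those of r. -/
theorem stmt1
    (q : List DBAtom) (hsjf : SelfJoinFree q) (htopo : IsTopoSort q)
    (db : Finset DBFact) (r : Finset DBFact) (hr : IsRepair db r) :
    ∃ rstar : Finset DBFact, Superfrugal q db rstar ∧
      ∀ θ : Assignment, IsEmbedding q rstar θ → IsEmbedding q r θ := by
  classical
  by_cases hcert : ∀ r', IsRepair db r' → Entails r' emptyAssignment q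
  · -- q is certain: take a repair minimizing the measure below r
    obtain ⟨s₀, hs₀mem, hs₀min⟩ :=
      (db.powerset.filter (fun t => IsRepair db t ∧ StmtOne.EmbSet q t ⊆ StmtOne.EmbSet q r)).exists_min_image
        (fun s => (db.powerset.filter
          (fun t => IsRepair db t ∧ StmtOne.EmbSet q t ⊆ StmtOne.EmbSet q s)).card)
        ⟨r, by
          rw [Finset.mem_filter, Finset.mem_powerset]
          exact ⟨hr.1, hr, subset_rfl⟩⟩
    rw [Finset.mem_filter, Finset.mem_powerset] at hs₀mem
    obtain ⟨hs₀db, hs₀rep, hs₀sub⟩ := hs₀mem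
    have hmin : ∀ h : Finset DBFact, IsRepair db h →
        StmtOne.EmbSet q h ⊆ StmtOne.EmbSet q s₀ →
        StmtOne.EmbSet q s₀ ⊆ StmtOne.EmbSet q h := by
      intro h hhrep hsub
      by_contra hnsub
      rw [Set.not_subset] at hnsub
      obtain ⟨θ₁, hθ₁s, hθ₁h⟩ := hnsub
      have hhR : h ∈ db.powerset.filter
          (fun t => IsRepair db t ∧ StmtOne.EmbSet q t ⊆ StmtOne.EmbSet q r) := by
        rw [Finset.mem_filter, Finset.mem_powerset]
        exact ⟨hhrep.1, hhrep, hsub.trans hs₀sub⟩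
      have hlt : (db.powerset.filter
            (fun t => IsRepair db t ∧ StmtOne.EmbSet q t ⊆ StmtOne.EmbSet q h)).card <
          (db.powerset.filter
            (fun t => IsRepair db t ∧ StmtOne.EmbSet q t ⊆ StmtOne.EmbSet q s₀)).card := by
        apply Finset.card_lt_card
        constructor
        · intro t ht
          rw [Finset.mem_filter] at ht ⊢
          exact ⟨ht.1, ht.2.1, ht.2.2.trans hsub⟩
        · intro hsupset
          have hs₀in : s₀ ∈ db.powerset.filter
              (fun t => IsRepair db t ∧ StmtOne.EmbSet q t ⊆ StmtOne.EmbSet q s₀) := by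
            rw [Finset.mem_filter, Finset.mem_powerset]
            exact ⟨hs₀db, hs₀rep, subset_rfl⟩
          have := hsupset hs₀in
          rw [Finset.mem_filter] at this
          exact hθ₁h (this.2.2 hθ₁s)
      exact absurd (hs₀min h hhR) (not_le.2 hlt)
    refine ⟨s₀, ⟨hs₀rep, ?_⟩, fun θ hθ => hs₀sub hθ⟩
    intro θ hθ
    have hall := StmtOne.forall_emb hsjf htopo hs₀rep hmin hcert hθ q.length (le_refl _)
    have heq : θ.restrict ↑(uVars q q.length) = θ := by
      rw [StmtOne.uVars_length]
      exact StmtOne.restrict_eq_self hθ.1.subset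
    rwa [heq] at hall
  · -- q is not certain: a falsifying repair works vacuously
    push_neg at hcert
    obtain ⟨r₀, hr₀rep, hr₀bad⟩ := hcert
    exact ⟨r₀, ⟨hr₀rep, fun θ hθ => absurd (StmtOne.entails_of_embedding hθ) hr₀bad⟩,
      fun θ hθ => absurd (StmtOne.entails_of_embedding hθ) hr₀bad⟩
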